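/- For each k ≥ 1 and x ∈ (0,1), the principal-value integral ∫₀¹ (φ_k(y) − φ_k(x)) ν(x,y) dy equals −kπ φ_k(x), where φ_k(y) = √2 cos(kπy) and ν(x,y) = (π/2)[1/(1−cos(π(x−y))) + 1/(1−cos(π(x+y)))]. That is, the integral operator with kernel ν coincides with the spectral operator I on the Neumann eigenfunctions. -/

import Mathlib

open Real Set MeasureTheory

/-- The singular integral kernel representing the operator `I` on `(0,1)`. -/
noncomputable def nuKer (x y : ℝ) : ℝ :=
  Real.pi / 2 * (1 / (1 - Real.cos (Real.pi * (x - y)))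
    + 1 / (1 - Real.cos (Real.pi * (x + y))))

open Filter intervalIntegral

lemma one_sub_cos_pos {t : ℝ} (h0 : t ≠ 0) (h2 : |t| < 2) : 0 < 1 - Real.cos (π * t) := by
  have hb1 : -(2 * π) < π * t := by rw [abs_lt] at h2; nlinarith [pi_pos]
  have hb2 : π * t < 2 * π := by rw [abs_lt] at h2; nlinarith [pi_pos]
  have h1 : Real.cos (π * t) ≠ 1 := by
    intro hc
    exact (mul_ne_zero pi_ne_zero h0) ((Real.cos_eq_one_iff_of_lt_of_lt hb1 hb2).mp hc)
  cases lt_or_eq_of_le (Real.cos_le_one (π * t)) with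
  | inl h => linarith
  | inr h => exact absurd h h1

lemma cos_gt_left {x y : ℝ} (hx : x ∈ Ioo (0:ℝ) 1) (hy0 : 0 ≤ y) (hyx : y < x) :
    Real.cos (π * x) < Real.cos (π * y) := by
  obtain ⟨hx0, hx1⟩ := hx
  exact Real.strictAntiOn_cos ⟨mul_nonneg pi_pos.le hy0, by nlinarith [pi_pos]⟩
    ⟨by positivity, by nlinarith [pi_pos]⟩ (by nlinarith [pi_pos])

lemma cos_lt_right {x y : ℝ} (hx : x ∈ Ioo (0:ℝ) 1) (hxy : x < y) (hy1 : y ≤ 1) :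
    Real.cos (π * y) < Real.cos (π * x) := by
  obtain ⟨hx0, hx1⟩ := hx
  exact Real.strictAntiOn_cos ⟨by positivity, by nlinarith [pi_pos]⟩
    ⟨by nlinarith [pi_pos], by nlinarith [pi_pos]⟩ (by nlinarith [pi_pos])

lemma cos_ne_cos {x y : ℝ} (hx : x ∈ Ioo (0:ℝ) 1) (hy : y ∈ Icc (0:ℝ) 1) (hne : y ≠ x) :
    Real.cos (π * y) - Real.cos (π * x) ≠ 0 := by
  rcases lt_or_gt_of_ne hne with h | h
  · exact ne_of_gt (sub_pos.mpr (cos_gt_left hx hy.1 h))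
  · exact ne_of_lt (sub_neg.mpr (cos_lt_right hx h hy.2))

lemma nuKer_eq {x y : ℝ} (hx : x ∈ Ioo (0:ℝ) 1) (hy : y ∈ Icc (0:ℝ) 1) (hne : y ≠ x) :
    nuKer x y = π * (1 - Real.cos (π*x) * Real.cos (π*y)) /
      (Real.cos (π*y) - Real.cos (π*x))^2 := by
  obtain ⟨hx0, hx1⟩ := hx
  obtain ⟨hy0, hy1⟩ := hy
  have h1 : 0 < 1 - Real.cos (π * (x - y)) := by
    apply one_sub_cos_pos (sub_ne_zero.mpr (Ne.symm hne))
    rw [abs_sub_lt_iff]; constructor <;> linarith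
  have h2 : 0 < 1 - Real.cos (π * (x + y)) := by
    have hxy0 : 0 < x + y := by linarith
    apply one_sub_cos_pos (ne_of_gt hxy0)
    rw [abs_of_pos hxy0]; linarith
  have h3 : Real.cos (π * y) - Real.cos (π * x) ≠ 0 := cos_ne_cos ⟨hx0, hx1⟩ ⟨hy0, hy1⟩ hne
  unfold nuKer
  rw [show π * (x - y) = π * x - π * y by ring] at h1 ⊢
  rw [show π * (x + y) = π * x + π * y by ring] at h2 ⊢
  rw [Real.cos_sub] at h1 ⊢
  rw [Real.cos_add] at h2 ⊢
  have key : (1 - (Real.cos (π*x) * Real.cos (π*y) + Real.sin (π*x) * Real.sin (π*y))) *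
      (1 - (Real.cos (π*x) * Real.cos (π*y) - Real.sin (π*x) * Real.sin (π*y)))
      = (Real.cos (π*y) - Real.cos (π*x))^2 := by
    linear_combination (-(Real.sin (π*y))^2) * Real.sin_sq (π*x)
      + ((Real.cos (π*x))^2 - 1) * Real.sin_sq (π*y)
  have e1 : 1/(1 - (Real.cos (π*x) * Real.cos (π*y) + Real.sin (π*x) * Real.sin (π*y)))
      + 1/(1 - (Real.cos (π*x) * Real.cos (π*y) - Real.sin (π*x) * Real.sin (π*y)))
      = 2*(1 - Real.cos (π*x) * Real.cos (π*y)) / (Real.cos (π*y) - Real.cos (π*x))^2 := by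
    rw [div_add_div _ _ (ne_of_gt h1) (ne_of_gt h2), key]
    congr 1; ring
  rw [e1]; ring

lemma hasDerivAt_cos_lin (a t : ℝ) :
    HasDerivAt (fun y => Real.cos (a * y)) (-(a * Real.sin (a * t))) t := by
  have h := (Real.hasDerivAt_cos (a*t)).comp t ((hasDerivAt_id t).const_mul a)
  simpa [Function.comp_def, mul_comm] using h

lemma hasDerivAt_sin_lin (a t : ℝ) :
    HasDerivAt (fun y => Real.sin (a * y)) (a * Real.cos (a * t)) t := by
  have h := (Real.hasDerivAt_sin (a*t)).comp t ((hasDerivAt_id t).const_mul a)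
  simpa [Function.comp_def, mul_comm] using h

lemma sin_half_pos {t : ℝ} (h0 : 0 < t) (h : t < 2) : 0 < Real.sin (π * t / 2) :=
  Real.sin_pos_of_pos_of_lt_pi (by nlinarith [pi_pos]) (by nlinarith [pi_pos])

lemma sin_half_ne {t : ℝ} (h0 : t ≠ 0) (h : |t| < 2) : Real.sin (π * t / 2) ≠ 0 := by
  rw [abs_lt] at h
  rcases h0.lt_or_gt with hlt | hgt
  · have hpos := sin_half_pos (t := -t) (by linarith) (by linarith)
    rw [show π * (-t) / 2 = -(π * t / 2) by ring, Real.sin_neg] at hpos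
    linarith
  · exact ne_of_gt (sin_half_pos hgt h.2)

lemma hasDerivAt_A {x : ℝ} (hx : x ∈ Ioo (0:ℝ) 1) {y : ℝ} (hy : y ∈ Icc (0:ℝ) 1) (hne : y ≠ x) :
    HasDerivAt (fun z => (Real.log (Real.sin (π*(z+x)/2)) - Real.log (Real.sin (π*(z-x)/2)))
        / (π * Real.sin (π*x)))
      (1 / (Real.cos (π*y) - Real.cos (π*x))) y := by
  obtain ⟨hx0, hx1⟩ := hx
  obtain ⟨hy0, hy1⟩ := hy
  have hsx : 0 < Real.sin (π * x) := Real.sin_pos_of_pos_of_lt_pi (by positivity) (by nlinarith [pi_pos])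
  have hs1 : Real.sin (π*(y+x)/2) ≠ 0 :=
    ne_of_gt (sin_half_pos (by linarith) (by linarith))
  have hs2 : Real.sin (π*(y-x)/2) ≠ 0 := by
    apply sin_half_ne (sub_ne_zero.mpr hne)
    rw [abs_sub_lt_iff]; constructor <;> linarith
  have h3 : Real.cos (π * y) - Real.cos (π * x) ≠ 0 :=
    cos_ne_cos ⟨hx0, hx1⟩ ⟨hy0, hy1⟩ hne
  have hl1 : HasDerivAt (fun z : ℝ => π*(z+x)/2) (π/2) y := by
    simpa using (((hasDerivAt_id y).add_const x).const_mul π).div_const 2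
  have hl2 : HasDerivAt (fun z : ℝ => π*(z-x)/2) (π/2) y := by
    simpa using (((hasDerivAt_id y).sub_const x).const_mul π).div_const 2
  have hsin1 : HasDerivAt (fun z : ℝ => Real.sin (π*(z+x)/2)) (Real.cos (π*(y+x)/2) * (π/2)) y :=
    (Real.hasDerivAt_sin _).comp y hl1
  have hsin2 : HasDerivAt (fun z : ℝ => Real.sin (π*(z-x)/2)) (Real.cos (π*(y-x)/2) * (π/2)) y :=
    (Real.hasDerivAt_sin _).comp y hl2
  have hlog1 : HasDerivAt (fun z : ℝ => Real.log (Real.sin (π*(z+x)/2)))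
      ((Real.sin (π*(y+x)/2))⁻¹ * (Real.cos (π*(y+x)/2) * (π/2))) y :=
    by have := (Real.hasDerivAt_log hs1).comp y hsin1; exact this
  have hlog2 : HasDerivAt (fun z : ℝ => Real.log (Real.sin (π*(z-x)/2)))
      ((Real.sin (π*(y-x)/2))⁻¹ * (Real.cos (π*(y-x)/2) * (π/2))) y :=
    by have := (Real.hasDerivAt_log hs2).comp y hsin2; exact this
  have hd := (hlog1.sub hlog2).div_const (π * Real.sin (π*x))
  have hsx2 : Real.sin (π * x) ≠ 0 := ne_of_gt hsx
  refine hd.congr_deriv (Eq.symm ?_)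
  rw [show π*y = π*(y-x)/2 + π*(y+x)/2 by ring] at h3 ⊢
  rw [show π*x = π*(y+x)/2 - π*(y-x)/2 by ring] at h3 hsx2 ⊢
  rw [Real.cos_add] at h3 ⊢
  rw [Real.cos_sub] at h3 ⊢
  rw [Real.sin_sub] at hsx2 ⊢
  rw [div_eq_div_iff h3 (mul_ne_zero pi_ne_zero hsx2)]
  field_simp [hs1, hs2, hsx2, h3]
  ring

lemma hasDerivAt_G (k : ℕ) {x y : ℝ} (hx : x ∈ Ioo (0:ℝ) 1) (hy : y ∈ Icc (0:ℝ) 1)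
    (hne : y ≠ x) :
    HasDerivAt (fun z => Real.sqrt 2 * (Real.cos (k*π*z) - Real.cos (k*π*x)) * Real.sin (π*z)
        / (Real.cos (π*z) - Real.cos (π*x)))
      ((Real.sqrt 2 * Real.cos (k*π*y) - Real.sqrt 2 * Real.cos (k*π*x)) * nuKer x y
        - Real.sqrt 2 * (k*π) * (Real.sin (k*π*y) * Real.sin (π*y))
          / (Real.cos (π*y) - Real.cos (π*x))) y := by
  have h3 : Real.cos (π * y) - Real.cos (π * x) ≠ 0 := cos_ne_cos hx hy hne
  have hc1 : HasDerivAt (fun z : ℝ => Real.cos ((k:ℝ)*π*z) - Real.cos ((k:ℝ)*π*x))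
      (-((k:ℝ)*π * Real.sin ((k:ℝ)*π*y))) y := (hasDerivAt_cos_lin _ _).sub_const _
  have hnum : HasDerivAt (fun z : ℝ => Real.sqrt 2 * (Real.cos ((k:ℝ)*π*z) - Real.cos ((k:ℝ)*π*x)) * Real.sin (π*z))
      ((Real.sqrt 2 * (-((k:ℝ)*π * Real.sin ((k:ℝ)*π*y)))) * Real.sin (π*y)
        + Real.sqrt 2 * (Real.cos ((k:ℝ)*π*y) - Real.cos ((k:ℝ)*π*x)) * (π * Real.cos (π*y))) y :=
    (hc1.const_mul (Real.sqrt 2)).mul (hasDerivAt_sin_lin π y)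
  have hden : HasDerivAt (fun z : ℝ => Real.cos (π*z) - Real.cos (π*x)) (-(π * Real.sin (π*y))) y :=
    (hasDerivAt_cos_lin π y).sub_const _
  have hd := hnum.div hden h3
  refine hd.congr_deriv (Eq.symm ?_)
  rw [nuKer_eq hx hy hne]
  have hs := Real.sin_sq (π * y)
  field_simp
  ring_nf
  rw [hs]
  ring

lemma intInt_left {x δ : ℝ} (hx : x ∈ Ioo (0:ℝ) 1) (hδ : 0 < δ) (hδx : δ ≤ x)
    (g : ℝ → ℝ) (hg : Continuous g) :
    IntervalIntegrable (fun y => g y / (Real.cos (π*y) - Real.cos (π*x))) volume 0 (x - δ) := by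
  apply ContinuousOn.intervalIntegrable
  rw [uIcc_of_le (by linarith : (0:ℝ) ≤ x - δ)]
  apply ContinuousOn.div hg.continuousOn (by fun_prop)
  exact fun y hy => ne_of_gt (sub_pos.mpr (cos_gt_left hx hy.1 (by linarith [hy.2])))

lemma intInt_right {x δ : ℝ} (hx : x ∈ Ioo (0:ℝ) 1) (hδ : 0 < δ) (hδx : δ ≤ 1 - x)
    (g : ℝ → ℝ) (hg : Continuous g) :
    IntervalIntegrable (fun y => g y / (Real.cos (π*y) - Real.cos (π*x))) volume (x + δ) 1 := by
  apply ContinuousOn.intervalIntegrable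
  rw [uIcc_of_le (by linarith : x + δ ≤ 1)]
  apply ContinuousOn.div hg.continuousOn (by fun_prop)
  exact fun y hy => ne_of_lt (sub_neg.mpr (cos_lt_right hx (by linarith [hy.1]) hy.2))

lemma integral_cos_lin (c a b : ℝ) (hc : c ≠ 0) :
    ∫ y in a..b, Real.cos (c*y) = (Real.sin (c*b) - Real.sin (c*a))/c := by
  rw [intervalIntegral.integral_comp_mul_left (fun t => Real.cos t) hc]
  rw [integral_cos]
  simp [smul_eq_mul]
  ring

lemma glauert {x : ℝ} (hx : x ∈ Ioo (0:ℝ) 1) (n : ℕ) :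
    Filter.Tendsto (fun δ : ℝ =>
      (∫ y in (0:ℝ)..(x - δ), Real.cos (n*π*y) / (Real.cos (π*y) - Real.cos (π*x)))
      + ∫ y in (x + δ)..(1:ℝ), Real.cos (n*π*y) / (Real.cos (π*y) - Real.cos (π*x)))
      (nhdsWithin 0 (Ioi 0)) (nhds (Real.sin (n*π*x) / Real.sin (π*x))) := by
  obtain ⟨hx0, hx1⟩ := hx
  have hx' : x ∈ Ioo (0:ℝ) 1 := ⟨hx0, hx1⟩
  have hpi := Real.pi_pos
  have hsx : 0 < Real.sin (π * x) := Real.sin_pos_of_pos_of_lt_pi (by positivity) (by nlinarith)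
  set m : ℝ := min x (1 - x) with hm
  have hm0 : 0 < m := lt_min (by linarith) (by linarith)
  have hmem : Ioo (0:ℝ) m ∈ nhdsWithin (0:ℝ) (Ioi 0) :=
    Ioo_mem_nhdsGT_of_mem ⟨le_refl 0, hm0⟩
  -- base case 0
  have P0 : Filter.Tendsto (fun δ : ℝ =>
      (∫ y in (0:ℝ)..(x - δ), 1 / (Real.cos (π*y) - Real.cos (π*x)))
      + ∫ y in (x + δ)..(1:ℝ), 1 / (Real.cos (π*y) - Real.cos (π*x)))
      (nhdsWithin 0 (Ioi 0)) (nhds 0) := by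
    set L : ℝ → ℝ := fun t => Real.log (Real.sin (π*t/2)) with hL
    set Af : ℝ → ℝ := fun y => (Real.log (Real.sin (π*(y+x)/2)) - Real.log (Real.sin (π*(y-x)/2)))
        / (π * Real.sin (π*x)) with hAf
    have heq : ∀ δ ∈ Ioo (0:ℝ) m, (∫ y in (0:ℝ)..(x - δ), 1 / (Real.cos (π*y) - Real.cos (π*x)))
        + ∫ y in (x + δ)..(1:ℝ), 1 / (Real.cos (π*y) - Real.cos (π*x))
        = (L (2*x - δ) - L (2*x + δ)) / (π * Real.sin (π*x)) := by
      intro δ hδ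
      obtain ⟨hδ0, hδm⟩ := hδ
      have hδx : δ < x := lt_of_lt_of_le hδm (min_le_left _ _)
      have hδ1 : δ < 1 - x := lt_of_lt_of_le hδm (min_le_right _ _)
      have hleft : (∫ y in (0:ℝ)..(x - δ), 1 / (Real.cos (π*y) - Real.cos (π*x)))
          = Af (x - δ) - Af 0 := by
        apply intervalIntegral.integral_eq_sub_of_hasDerivAt
        · intro y hy
          rw [uIcc_of_le (by linarith : (0:ℝ) ≤ x - δ)] at hy
          exact hasDerivAt_A hx' ⟨hy.1, by linarith [hy.2]⟩ (by intro h; rw [h] at hy; linarith [hy.2])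
        · exact intInt_left hx' hδ0 hδx.le (fun _ => 1) continuous_const
      have hright : (∫ y in (x + δ)..(1:ℝ), 1 / (Real.cos (π*y) - Real.cos (π*x)))
          = Af 1 - Af (x + δ) := by
        apply intervalIntegral.integral_eq_sub_of_hasDerivAt
        · intro y hy
          rw [uIcc_of_le (by linarith : x + δ ≤ 1)] at hy
          exact hasDerivAt_A hx' ⟨by linarith [hy.1], hy.2⟩ (by intro h; rw [h] at hy; linarith [hy.1])
        · exact intInt_right hx' hδ0 hδ1.le (fun _ => 1) continuous_const
      rw [hleft, hright]
      have hA0 : Af 0 = 0 := by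
        simp only [hAf]
        rw [show π*(0+x)/2 = π*x/2 by ring, show π*(0-x)/2 = -(π*x/2) by ring,
          Real.sin_neg, Real.log_neg_eq_log]
        simp
      have hA1 : Af 1 = 0 := by
        simp only [hAf]
        rw [show π*(1+x)/2 = π - π*(1-x)/2 by ring, Real.sin_pi_sub]
        simp
      have hAleft : Af (x - δ) = (L (2*x - δ) - L δ) / (π * Real.sin (π*x)) := by
        simp only [hAf, hL]
        rw [show π*(x-δ+x)/2 = π*(2*x-δ)/2 by ring, show π*(x-δ-x)/2 = -(π*δ/2) by ring,
          Real.sin_neg, Real.log_neg_eq_log]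
      have hAright : Af (x + δ) = (L (2*x + δ) - L δ) / (π * Real.sin (π*x)) := by
        simp only [hAf, hL]
        rw [show π*(x+δ+x)/2 = π*(2*x+δ)/2 by ring, show π*(x+δ-x)/2 = π*δ/2 by ring]
      rw [hA0, hA1, hAleft, hAright]
      ring
    apply Filter.Tendsto.congr' (Filter.eventuallyEq_of_mem hmem (fun δ hδ => (heq δ hδ).symm))
    have hcont : ContinuousAt L (2*x) := by
      have h1 : Real.sin (π*(2*x)/2) ≠ 0 := by
        rw [show π*(2*x)/2 = π*x by ring]; exact ne_of_gt hsx
      have hf : ContinuousAt (fun t : ℝ => Real.sin (π*t/2)) (2*x) := by fun_prop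
      exact hf.log h1
    have t1 : Filter.Tendsto (fun δ : ℝ => 2*x - δ) (nhdsWithin 0 (Ioi 0)) (nhds (2*x)) := by
      have hc : Continuous (fun δ : ℝ => 2*x - δ) := by fun_prop
      have h := hc.tendsto 0
      simp only [sub_zero] at h
      exact h.mono_left nhdsWithin_le_nhds
    have t2 : Filter.Tendsto (fun δ : ℝ => 2*x + δ) (nhdsWithin 0 (Ioi 0)) (nhds (2*x)) := by
      have hc : Continuous (fun δ : ℝ => 2*x + δ) := by fun_prop
      have h := hc.tendsto 0
      simp only [add_zero] at h
      exact h.mono_left nhdsWithin_le_nhds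
    have := ((hcont.tendsto.comp t1).sub (hcont.tendsto.comp t2)).div_const (π * Real.sin (π*x))
    simpa using this
  -- now general case by two-step induction
  set J : ℝ → ℝ → ℝ := fun q δ =>
      (∫ y in (0:ℝ)..(x - δ), Real.cos (q*π*y) / (Real.cos (π*y) - Real.cos (π*x)))
      + ∫ y in (x + δ)..(1:ℝ), Real.cos (q*π*y) / (Real.cos (π*y) - Real.cos (π*x)) with hJ
  set P : ℕ → Prop := fun n => Filter.Tendsto (J (n:ℝ))
      (nhdsWithin 0 (Ioi 0)) (nhds (Real.sin ((n:ℝ)*π*x) / Real.sin (π*x))) with hP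
  have base0 : P 0 := by
    simp only [hP, hJ, Nat.cast_zero, zero_mul, Real.cos_zero, Real.sin_zero, zero_div]
    exact P0
  have base1 : P 1 := by
    simp only [hP, hJ, Nat.cast_one, one_mul]
    have e : ∀ δ ∈ Ioo (0:ℝ) m,
        ((∫ y in (0:ℝ)..(x - δ), Real.cos (π*y) / (Real.cos (π*y) - Real.cos (π*x)))
          + ∫ y in (x + δ)..(1:ℝ), Real.cos (π*y) / (Real.cos (π*y) - Real.cos (π*x)))
        = (1 - 2*δ) + Real.cos (π*x) *
          ((∫ y in (0:ℝ)..(x - δ), 1 / (Real.cos (π*y) - Real.cos (π*x)))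
            + ∫ y in (x + δ)..(1:ℝ), 1 / (Real.cos (π*y) - Real.cos (π*x))) := by
      intro δ hδ
      obtain ⟨hδ0, hδm⟩ := hδ
      have hδx : δ < x := lt_of_lt_of_le hδm (min_le_left _ _)
      have hδ1 : δ < 1 - x := lt_of_lt_of_le hδm (min_le_right _ _)
      have eL : (∫ y in (0:ℝ)..(x - δ), Real.cos (π*y) / (Real.cos (π*y) - Real.cos (π*x)))
          = (x - δ) + Real.cos (π*x) * ∫ y in (0:ℝ)..(x - δ), 1 / (Real.cos (π*y) - Real.cos (π*x)) := by
        have hEq : Set.EqOn (fun y => Real.cos (π*y) / (Real.cos (π*y) - Real.cos (π*x)))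
            (fun y => 1 + Real.cos (π*x) * (1 / (Real.cos (π*y) - Real.cos (π*x))))
            (Set.uIcc 0 (x - δ)) := by
          intro y hy
          rw [uIcc_of_le (by linarith : (0:ℝ) ≤ x - δ)] at hy
          have hD : Real.cos (π*y) - Real.cos (π*x) ≠ 0 :=
            ne_of_gt (sub_pos.mpr (cos_gt_left hx' hy.1 (by linarith [hy.2])))
          field_simp
          ring
        rw [intervalIntegral.integral_congr hEq, intervalIntegral.integral_add
          intervalIntegrable_const
          (((intInt_left hx' hδ0 hδx.le (fun _ => 1) continuous_const)).const_mul _),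
          intervalIntegral.integral_const_mul]
        simp
      have eR : (∫ y in (x + δ)..(1:ℝ), Real.cos (π*y) / (Real.cos (π*y) - Real.cos (π*x)))
          = (1 - (x + δ)) + Real.cos (π*x) * ∫ y in (x + δ)..(1:ℝ), 1 / (Real.cos (π*y) - Real.cos (π*x)) := by
        have hEq : Set.EqOn (fun y => Real.cos (π*y) / (Real.cos (π*y) - Real.cos (π*x)))
            (fun y => 1 + Real.cos (π*x) * (1 / (Real.cos (π*y) - Real.cos (π*x))))
            (Set.uIcc (x + δ) 1) := by
          intro y hy
          rw [uIcc_of_le (by linarith : x + δ ≤ 1)] at hy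
          have hD : Real.cos (π*y) - Real.cos (π*x) ≠ 0 :=
            ne_of_lt (sub_neg.mpr (cos_lt_right hx' (by linarith [hy.1]) hy.2))
          field_simp
          ring
        rw [intervalIntegral.integral_congr hEq, intervalIntegral.integral_add
          intervalIntegrable_const
          (((intInt_right hx' hδ0 hδ1.le (fun _ => 1) continuous_const)).const_mul _),
          intervalIntegral.integral_const_mul]
        simp
      rw [eL, eR]; ring
    apply Filter.Tendsto.congr' (Filter.eventuallyEq_of_mem hmem (fun δ hδ => (e δ hδ).symm))
    have t1 : Filter.Tendsto (fun δ : ℝ => 1 - 2*δ) (nhdsWithin 0 (Ioi 0)) (nhds 1) := by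
      have hcont : Continuous (fun δ : ℝ => 1 - 2*δ) := by fun_prop
      have h := hcont.tendsto 0
      norm_num at h
      exact h.mono_left nhdsWithin_le_nhds
    have hlim1 := t1.add (P0.const_mul (Real.cos (π*x)))
    have hv : (1:ℝ) + Real.cos (π*x) * 0 = Real.sin (π*x)/Real.sin (π*x) := by
      rw [div_self (ne_of_gt hsx)]; ring
    rw [hv] at hlim1
    exact hlim1
  have step : ∀ n : ℕ, P n → P (n+1) → P (n+2) := by
    intro n pn pn1
    simp only [hP, hJ] at pn pn1 ⊢
    have e : ∀ δ ∈ Ioo (0:ℝ) m, J ((n:ℕ)+2 : ℕ) δ =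
        2 * (((Real.sin (((n:ℝ)+1)*π*(x-δ)) - Real.sin (((n:ℝ)+1)*π*0))/(((n:ℝ)+1)*π))
            + ((Real.sin (((n:ℝ)+1)*π*1) - Real.sin (((n:ℝ)+1)*π*(x+δ)))/(((n:ℝ)+1)*π)))
          + 2 * Real.cos (π*x) * J ((n:ℕ)+1 : ℕ) δ - J (n:ℕ) δ := by
      intro δ hδ
      obtain ⟨hδ0, hδm⟩ := hδ
      have hδx : δ < x := lt_of_lt_of_le hδm (min_le_left _ _)
      have hδ1 : δ < 1 - x := lt_of_lt_of_le hδm (min_le_right _ _)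
      have hq : ((n:ℝ)+1)*π ≠ 0 := by positivity
      have trig : ∀ y : ℝ, Real.cos ((((n:ℕ)+2 : ℕ):ℝ)*π*y)
          = 2*Real.cos (π*y)*Real.cos ((((n:ℕ)+1 : ℕ):ℝ)*π*y) - Real.cos ((n:ℝ)*π*y) := by
        intro y
        push_cast
        rw [show ((n:ℝ)+2)*π*y = (((n:ℝ)+1)*π*y) + π*y by ring,
          show (n:ℝ)*π*y = (((n:ℝ)+1)*π*y) - π*y by ring, Real.cos_add, Real.cos_sub]
        ring
      have hsplit : ∀ a b : ℝ, (∀ y ∈ Set.uIcc a b, Real.cos (π*y) - Real.cos (π*x) ≠ 0) →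
          IntervalIntegrable (fun y => Real.cos ((((n:ℕ)+1:ℕ):ℝ)*π*y) / (Real.cos (π*y) - Real.cos (π*x))) volume a b →
          IntervalIntegrable (fun y => Real.cos ((n:ℝ)*π*y) / (Real.cos (π*y) - Real.cos (π*x))) volume a b →
          (∫ y in a..b, Real.cos ((((n:ℕ)+2:ℕ):ℝ)*π*y) / (Real.cos (π*y) - Real.cos (π*x)))
          = 2 * ((Real.sin ((((n:ℕ)+1:ℕ):ℝ)*π*b) - Real.sin ((((n:ℕ)+1:ℕ):ℝ)*π*a))/((((n:ℕ)+1:ℕ):ℝ)*π))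
            + 2 * Real.cos (π*x) * (∫ y in a..b, Real.cos ((((n:ℕ)+1:ℕ):ℝ)*π*y) / (Real.cos (π*y) - Real.cos (π*x)))
            - ∫ y in a..b, Real.cos ((n:ℝ)*π*y) / (Real.cos (π*y) - Real.cos (π*x)) := by
        intro a b hD h1 h0
        have hEq : Set.EqOn (fun y => Real.cos ((((n:ℕ)+2:ℕ):ℝ)*π*y) / (Real.cos (π*y) - Real.cos (π*x)))
            (fun y => (2 * Real.cos ((((n:ℕ)+1:ℕ):ℝ)*π*y)
              + (2 * Real.cos (π*x)) * (Real.cos ((((n:ℕ)+1:ℕ):ℝ)*π*y) / (Real.cos (π*y) - Real.cos (π*x))))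
              - Real.cos ((n:ℝ)*π*y) / (Real.cos (π*y) - Real.cos (π*x))) (Set.uIcc a b) := by
          intro y hy
          have hDy := hD y hy
          simp only
          rw [trig y]
          field_simp
          ring
        rw [intervalIntegral.integral_congr hEq]
        have i1 : IntervalIntegrable (fun y => 2 * Real.cos ((((n:ℕ)+1:ℕ):ℝ)*π*y)) volume a b :=
          (Continuous.intervalIntegrable (by fun_prop) a b)
        rw [intervalIntegral.integral_sub (i1.add (h1.const_mul _)) h0,
          intervalIntegral.integral_add i1 (h1.const_mul _),
          intervalIntegral.integral_const_mul, intervalIntegral.integral_const_mul]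
        have : (∫ y in a..b, Real.cos ((((n:ℕ)+1:ℕ):ℝ)*π*y))
            = (Real.sin ((((n:ℕ)+1:ℕ):ℝ)*π*b) - Real.sin ((((n:ℕ)+1:ℕ):ℝ)*π*a))/((((n:ℕ)+1:ℕ):ℝ)*π) := by
          have := integral_cos_lin ((((n:ℕ)+1:ℕ):ℝ)*π) a b (by push_cast; positivity)
          simp only [mul_assoc] at this ⊢
          exact this
        rw [this]
      have hL := hsplit 0 (x-δ)
        (by
          intro y hy
          rw [uIcc_of_le (by linarith : (0:ℝ) ≤ x - δ)] at hy
          exact ne_of_gt (sub_pos.mpr (cos_gt_left hx' hy.1 (by linarith [hy.2]))))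
        (intInt_left hx' hδ0 hδx.le _ (by fun_prop))
        (intInt_left hx' hδ0 hδx.le _ (by fun_prop))
      have hR := hsplit (x+δ) 1
        (by
          intro y hy
          rw [uIcc_of_le (by linarith : x + δ ≤ 1)] at hy
          exact ne_of_lt (sub_neg.mpr (cos_lt_right hx' (by linarith [hy.1]) hy.2)))
        (intInt_right hx' hδ0 hδ1.le _ (by fun_prop))
        (intInt_right hx' hδ0 hδ1.le _ (by fun_prop))
      simp only [hJ]
      push_cast at hL hR ⊢
      rw [hL, hR]
      ring
    -- limit of the pure cosine part
    have tT : Filter.Tendsto (fun δ : ℝ =>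
        2 * (((Real.sin (((n:ℝ)+1)*π*(x-δ)) - Real.sin (((n:ℝ)+1)*π*0))/(((n:ℝ)+1)*π))
            + ((Real.sin (((n:ℝ)+1)*π*1) - Real.sin (((n:ℝ)+1)*π*(x+δ)))/(((n:ℝ)+1)*π))))
        (nhdsWithin 0 (Ioi 0)) (nhds 0) := by
      have hcont : Continuous (fun δ : ℝ =>
          2 * (((Real.sin (((n:ℝ)+1)*π*(x-δ)) - Real.sin (((n:ℝ)+1)*π*0))/(((n:ℝ)+1)*π))
            + ((Real.sin (((n:ℝ)+1)*π*1) - Real.sin (((n:ℝ)+1)*π*(x+δ)))/(((n:ℝ)+1)*π)))) := by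
        fun_prop
      have h := hcont.tendsto 0
      have hval : 2 * (((Real.sin (((n:ℝ)+1)*π*(x-0)) - Real.sin (((n:ℝ)+1)*π*0))/(((n:ℝ)+1)*π))
            + ((Real.sin (((n:ℝ)+1)*π*1) - Real.sin (((n:ℝ)+1)*π*(x+0)))/(((n:ℝ)+1)*π))) = 0 := by
        have hs1 : Real.sin (((n:ℝ)+1)*π*1) = 0 := by
          rw [show ((n:ℝ)+1)*π*1 = ((n+1:ℕ):ℝ)*π by push_cast; ring]
          exact Real.sin_nat_mul_pi (n+1)
        rw [hs1]
        simp only [mul_zero, Real.sin_zero, sub_zero, add_zero]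
        ring
      rw [hval] at h
      exact h.mono_left nhdsWithin_le_nhds
    have final := (tT.add ((pn1.const_mul (2 * Real.cos (π*x))).sub pn))
    have hlim : (0:ℝ) + (2 * Real.cos (π*x) * (Real.sin ((((n:ℕ)+1:ℕ):ℝ)*π*x) / Real.sin (π*x))
        - Real.sin ((n:ℝ)*π*x) / Real.sin (π*x)) = Real.sin ((((n:ℕ)+2:ℕ):ℝ)*π*x) / Real.sin (π*x) := by
      push_cast
      rw [show ((n:ℝ)+2)*π*x = (((n:ℝ)+1)*π*x) + π*x by ring,
        show (n:ℝ)*π*x = (((n:ℝ)+1)*π*x) - π*x by ring, Real.sin_add, Real.sin_sub]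
      field_simp
      ring
    rw [hlim] at final
    simp only [hJ] at e
    refine Filter.Tendsto.congr' (Filter.eventuallyEq_of_mem hmem (fun δ hδ => ?_)) final
    rw [e δ hδ]
    ring
  have main : ∀ n : ℕ, P n ∧ P (n+1) := by
    intro n
    induction n with
    | zero => exact ⟨base0, base1⟩
    | succ k ih => exact ⟨ih.2, step k ih.1 ih.2⟩
  exact (main n).1


lemma contOn_nuKer {x : ℝ} (hx : x ∈ Ioo (0:ℝ) 1) {s : Set ℝ}
    (hs : ∀ y ∈ s, y ∈ Icc (0:ℝ) 1 ∧ y ≠ x) : ContinuousOn (fun y => nuKer x y) s := by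
  obtain ⟨hx0, hx1⟩ := hx
  unfold nuKer
  apply ContinuousOn.mul continuousOn_const
  apply ContinuousOn.add
  · apply ContinuousOn.div continuousOn_const (by fun_prop)
    intro y hy
    obtain ⟨⟨hy0, hy1⟩, hne⟩ := hs y hy
    have h := one_sub_cos_pos (t := x - y) (sub_ne_zero.mpr hne.symm)
      (by rw [abs_sub_lt_iff]; constructor <;> linarith)
    linarith
  · apply ContinuousOn.div continuousOn_const (by fun_prop)
    intro y hy
    obtain ⟨⟨hy0, hy1⟩, hne⟩ := hs y hy
    have h := one_sub_cos_pos (t := x + y) (by positivity)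
      (by rw [abs_of_pos (by positivity)]; linarith)
    linarith

/-- The integral operator with kernel `ν` coincides with the spectral operator `I`
on the Neumann eigenfunctions: the principal value of
`∫₀¹ (φ_k(y) − φ_k(x)) ν(x,y) dy` equals `−kπ φ_k(x)`. -/
theorem stmt16 (k : ℕ) (hk : 1 ≤ k) (x : ℝ) (hx : x ∈ Ioo (0:ℝ) 1) :
    Filter.Tendsto
      (fun δ : ℝ => ∫ y in {y : ℝ | y ∈ Ioo (0:ℝ) 1 ∧ δ ≤ |y - x|},
        (Real.sqrt 2 * Real.cos (k * Real.pi * y)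
          - Real.sqrt 2 * Real.cos (k * Real.pi * x)) * nuKer x y)
      (nhdsWithin 0 (Ioi 0))
      (nhds (-(k * Real.pi) * (Real.sqrt 2 * Real.cos (k * Real.pi * x)))) := by
  obtain ⟨hx0, hx1⟩ := hx
  have hx' : x ∈ Ioo (0:ℝ) 1 := ⟨hx0, hx1⟩
  have hpi := Real.pi_pos
  have hsx : 0 < Real.sin (π * x) :=
    Real.sin_pos_of_pos_of_lt_pi (by positivity) (by nlinarith)
  set m : ℝ := min x (1 - x) with hm
  have hm0 : 0 < m := lt_min (by linarith) (by linarith)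
  have hmem : Ioo (0:ℝ) m ∈ nhdsWithin (0:ℝ) (Ioi 0) :=
    Ioo_mem_nhdsGT_of_mem ⟨le_refl 0, hm0⟩
  set G : ℝ → ℝ := fun z => Real.sqrt 2 * (Real.cos (k*π*z) - Real.cos (k*π*x)) * Real.sin (π*z)
      / (Real.cos (π*z) - Real.cos (π*x)) with hG
  set C : ℝ := Real.sqrt 2 * (k:ℝ) * π / 2 with hC
  -- the eventual equality
  have hey : ∀ δ ∈ Ioo (0:ℝ) m,
      (∫ y in {y : ℝ | y ∈ Ioo (0:ℝ) 1 ∧ δ ≤ |y - x|},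
        (Real.sqrt 2 * Real.cos (k * π * y) - Real.sqrt 2 * Real.cos (k * π * x)) * nuKer x y)
      = (G (x - δ) - G (x + δ)) + C *
        (((∫ y in (0:ℝ)..(x - δ), Real.cos ((↑(k-1):ℝ)*π*y) / (Real.cos (π*y) - Real.cos (π*x)))
          + ∫ y in (x + δ)..(1:ℝ), Real.cos ((↑(k-1):ℝ)*π*y) / (Real.cos (π*y) - Real.cos (π*x)))
        - ((∫ y in (0:ℝ)..(x - δ), Real.cos ((↑(k+1):ℝ)*π*y) / (Real.cos (π*y) - Real.cos (π*x)))
          + ∫ y in (x + δ)..(1:ℝ), Real.cos ((↑(k+1):ℝ)*π*y) / (Real.cos (π*y) - Real.cos (π*x)))) := by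
    intro δ hδ
    obtain ⟨hδ0, hδm⟩ := hδ
    have hδx : δ < x := lt_of_lt_of_le hδm (min_le_left _ _)
    have hδ1 : δ < 1 - x := lt_of_lt_of_le hδm (min_le_right _ _)
    -- set splitting
    have hset : {y : ℝ | y ∈ Ioo (0:ℝ) 1 ∧ δ ≤ |y - x|}
        = Ioc 0 (x - δ) ∪ Ico (x + δ) 1 := by
      ext y
      simp only [mem_setOf_eq, mem_Ioo, mem_union, mem_Ioc, mem_Ico]
      constructor
      · rintro ⟨⟨h1, h2⟩, h3⟩
        rcases le_abs.mp h3 with h | h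
        · right; constructor <;> linarith
        · left; constructor <;> linarith
      · rintro (⟨h1, h2⟩ | ⟨h1, h2⟩)
        · exact ⟨⟨h1, by linarith⟩, le_abs.mpr (Or.inr (by linarith))⟩
        · exact ⟨⟨by linarith, h2⟩, le_abs.mpr (Or.inl (by linarith))⟩
    have hcontL : ContinuousOn (fun y =>
        (Real.sqrt 2 * Real.cos (k * π * y) - Real.sqrt 2 * Real.cos (k * π * x)) * nuKer x y)
        (Icc 0 (x - δ)) := by
      apply ContinuousOn.mul (Continuous.continuousOn (by fun_prop))
      exact contOn_nuKer hx' (fun y hy => ⟨⟨hy.1, by linarith [hy.2]⟩,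
        by intro h; rw [h] at hy; linarith [hy.2]⟩)
    have hcontR : ContinuousOn (fun y =>
        (Real.sqrt 2 * Real.cos (k * π * y) - Real.sqrt 2 * Real.cos (k * π * x)) * nuKer x y)
        (Icc (x + δ) 1) := by
      apply ContinuousOn.mul (Continuous.continuousOn (by fun_prop))
      exact contOn_nuKer hx' (fun y hy => ⟨⟨by linarith [hy.1], hy.2⟩,
        by intro h; rw [h] at hy; linarith [hy.1]⟩)
    have hIL : IntegrableOn (fun y =>
        (Real.sqrt 2 * Real.cos (k * π * y) - Real.sqrt 2 * Real.cos (k * π * x)) * nuKer x y)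
        (Ioc 0 (x - δ)) volume :=
      (hcontL.integrableOn_Icc).mono_set Ioc_subset_Icc_self
    have hIR : IntegrableOn (fun y =>
        (Real.sqrt 2 * Real.cos (k * π * y) - Real.sqrt 2 * Real.cos (k * π * x)) * nuKer x y)
        (Ico (x + δ) 1) volume :=
      (hcontR.integrableOn_Icc).mono_set Ico_subset_Icc_self
    have hdisj : Disjoint (Ioc (0:ℝ) (x - δ)) (Ico (x + δ) 1) := by
      apply Set.disjoint_left.mpr
      rintro y ⟨_, h1⟩ ⟨h2, _⟩
      linarith
    rw [hset, setIntegral_union hdisj measurableSet_Ico hIL hIR,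
      ← intervalIntegral.integral_of_le (by linarith : (0:ℝ) ≤ x - δ),
      MeasureTheory.integral_Ico_eq_integral_Ioo,
      ← MeasureTheory.integral_Ioc_eq_integral_Ioo,
      ← intervalIntegral.integral_of_le (by linarith : x + δ ≤ 1)]
    -- FTC on each piece
    have hfL : IntervalIntegrable (fun y =>
        (Real.sqrt 2 * Real.cos (k * π * y) - Real.sqrt 2 * Real.cos (k * π * x)) * nuKer x y)
        volume 0 (x - δ) := by
      apply ContinuousOn.intervalIntegrable
      rwa [uIcc_of_le (by linarith : (0:ℝ) ≤ x - δ)]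
    have hfR : IntervalIntegrable (fun y =>
        (Real.sqrt 2 * Real.cos (k * π * y) - Real.sqrt 2 * Real.cos (k * π * x)) * nuKer x y)
        volume (x + δ) 1 := by
      apply ContinuousOn.intervalIntegrable
      rwa [uIcc_of_le (by linarith : x + δ ≤ 1)]
    have hWL : IntervalIntegrable (fun y =>
        Real.sqrt 2 * ((k:ℝ)*π) * (Real.sin (k*π*y) * Real.sin (π*y))
          / (Real.cos (π*y) - Real.cos (π*x))) volume 0 (x - δ) :=
      intInt_left hx' hδ0 hδx.le _ (by fun_prop)
    have hWR : IntervalIntegrable (fun y =>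
        Real.sqrt 2 * ((k:ℝ)*π) * (Real.sin (k*π*y) * Real.sin (π*y))
          / (Real.cos (π*y) - Real.cos (π*x))) volume (x + δ) 1 :=
      intInt_right hx' hδ0 hδ1.le _ (by fun_prop)
    have hFTCL : (∫ y in (0:ℝ)..(x - δ),
        ((Real.sqrt 2 * Real.cos (k * π * y) - Real.sqrt 2 * Real.cos (k * π * x)) * nuKer x y
          - Real.sqrt 2 * ((k:ℝ)*π) * (Real.sin (k*π*y) * Real.sin (π*y))
            / (Real.cos (π*y) - Real.cos (π*x)))) = G (x - δ) - G 0 := by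
      apply intervalIntegral.integral_eq_sub_of_hasDerivAt
      · intro y hy
        rw [uIcc_of_le (by linarith : (0:ℝ) ≤ x - δ)] at hy
        exact hasDerivAt_G k hx' ⟨hy.1, by linarith [hy.2]⟩
          (by intro h; rw [h] at hy; linarith [hy.2])
      · exact hfL.sub hWL
    have hFTCR : (∫ y in (x + δ)..(1:ℝ),
        ((Real.sqrt 2 * Real.cos (k * π * y) - Real.sqrt 2 * Real.cos (k * π * x)) * nuKer x y
          - Real.sqrt 2 * ((k:ℝ)*π) * (Real.sin (k*π*y) * Real.sin (π*y))
            / (Real.cos (π*y) - Real.cos (π*x)))) = G 1 - G (x + δ) := by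
      apply intervalIntegral.integral_eq_sub_of_hasDerivAt
      · intro y hy
        rw [uIcc_of_le (by linarith : x + δ ≤ 1)] at hy
        exact hasDerivAt_G k hx' ⟨by linarith [hy.1], hy.2⟩
          (by intro h; rw [h] at hy; linarith [hy.1])
      · exact hfR.sub hWR
    rw [intervalIntegral.integral_sub hfL hWL] at hFTCL
    rw [intervalIntegral.integral_sub hfR hWR] at hFTCR
    -- decompose W
    have trig : ∀ y : ℝ, Real.sin ((k:ℝ)*π*y) * Real.sin (π*y)
        = (Real.cos ((↑(k-1):ℝ)*π*y) - Real.cos ((↑(k+1):ℝ)*π*y))/2 := by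
      intro y
      rw [Nat.cast_sub hk]
      push_cast
      rw [show ((k:ℝ)-1)*π*y = (k:ℝ)*π*y - π*y by ring,
        show ((k:ℝ)+1)*π*y = (k:ℝ)*π*y + π*y by ring, Real.cos_sub, Real.cos_add]
      ring
    have hWdecL : (∫ y in (0:ℝ)..(x - δ),
        Real.sqrt 2 * ((k:ℝ)*π) * (Real.sin (k*π*y) * Real.sin (π*y))
          / (Real.cos (π*y) - Real.cos (π*x)))
        = C * ((∫ y in (0:ℝ)..(x - δ), Real.cos ((↑(k-1):ℝ)*π*y) / (Real.cos (π*y) - Real.cos (π*x)))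
          - ∫ y in (0:ℝ)..(x - δ), Real.cos ((↑(k+1):ℝ)*π*y) / (Real.cos (π*y) - Real.cos (π*x))) := by
      have hEq : Set.EqOn (fun y => Real.sqrt 2 * ((k:ℝ)*π) * (Real.sin (k*π*y) * Real.sin (π*y))
          / (Real.cos (π*y) - Real.cos (π*x)))
          (fun y => C * (Real.cos ((↑(k-1):ℝ)*π*y) / (Real.cos (π*y) - Real.cos (π*x))
            - Real.cos ((↑(k+1):ℝ)*π*y) / (Real.cos (π*y) - Real.cos (π*x))))
          (Set.uIcc 0 (x - δ)) := by
        intro y hy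
        rw [uIcc_of_le (by linarith : (0:ℝ) ≤ x - δ)] at hy
        have hD : Real.cos (π*y) - Real.cos (π*x) ≠ 0 :=
          ne_of_gt (sub_pos.mpr (cos_gt_left hx' hy.1 (by linarith [hy.2])))
        simp only
        rw [trig y, hC, div_sub_div_same]
        ring
      rw [intervalIntegral.integral_congr hEq, intervalIntegral.integral_const_mul,
        intervalIntegral.integral_sub (intInt_left hx' hδ0 hδx.le _ (by fun_prop))
          (intInt_left hx' hδ0 hδx.le _ (by fun_prop))]
    have hWdecR : (∫ y in (x + δ)..(1:ℝ),
        Real.sqrt 2 * ((k:ℝ)*π) * (Real.sin (k*π*y) * Real.sin (π*y))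
          / (Real.cos (π*y) - Real.cos (π*x)))
        = C * ((∫ y in (x + δ)..(1:ℝ), Real.cos ((↑(k-1):ℝ)*π*y) / (Real.cos (π*y) - Real.cos (π*x)))
          - ∫ y in (x + δ)..(1:ℝ), Real.cos ((↑(k+1):ℝ)*π*y) / (Real.cos (π*y) - Real.cos (π*x))) := by
      have hEq : Set.EqOn (fun y => Real.sqrt 2 * ((k:ℝ)*π) * (Real.sin (k*π*y) * Real.sin (π*y))
          / (Real.cos (π*y) - Real.cos (π*x)))
          (fun y => C * (Real.cos ((↑(k-1):ℝ)*π*y) / (Real.cos (π*y) - Real.cos (π*x))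
            - Real.cos ((↑(k+1):ℝ)*π*y) / (Real.cos (π*y) - Real.cos (π*x))))
          (Set.uIcc (x + δ) 1) := by
        intro y hy
        rw [uIcc_of_le (by linarith : x + δ ≤ 1)] at hy
        have hD : Real.cos (π*y) - Real.cos (π*x) ≠ 0 :=
          ne_of_lt (sub_neg.mpr (cos_lt_right hx' (by linarith [hy.1]) hy.2))
        simp only
        rw [trig y, hC, div_sub_div_same]
        ring
      rw [intervalIntegral.integral_congr hEq, intervalIntegral.integral_const_mul,
        intervalIntegral.integral_sub (intInt_right hx' hδ0 hδ1.le _ (by fun_prop))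
          (intInt_right hx' hδ0 hδ1.le _ (by fun_prop))]
    have hG0 : G 0 = 0 := by simp [hG]
    have hG1 : G 1 = 0 := by simp [hG]
    rw [hWdecL] at hFTCL
    rw [hWdecR] at hFTCR
    rw [hG0] at hFTCL
    rw [hG1] at hFTCR
    linarith [hFTCL, hFTCR]
  -- limits
  have hJm := glauert hx' (k-1)
  have hJp := glauert hx' (k+1)
  -- limit of G (x-δ) - G (x+δ)
  have hslope1 : Filter.Tendsto (fun y => (Real.cos (k*π*y) - Real.cos (k*π*x)) / (y - x))
      (nhdsWithin x {x}ᶜ) (nhds (-((k:ℝ)*π * Real.sin (k*π*x)))) := by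
    have h := hasDerivAt_iff_tendsto_slope.mp (hasDerivAt_cos_lin ((k:ℝ)*π) x)
    apply h.congr
    intro y
    rw [slope_def_field]
  have hslope2 : Filter.Tendsto (fun y => (Real.cos (π*y) - Real.cos (π*x)) / (y - x))
      (nhdsWithin x {x}ᶜ) (nhds (-(π * Real.sin (π*x)))) := by
    have h := hasDerivAt_iff_tendsto_slope.mp (hasDerivAt_cos_lin π x)
    apply h.congr
    intro y
    rw [slope_def_field]
  have hsinlim : Filter.Tendsto (fun y => Real.sqrt 2 * Real.sin (π*y))
      (nhdsWithin x {x}ᶜ) (nhds (Real.sqrt 2 * Real.sin (π*x))) := by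
    apply Filter.Tendsto.mono_left _ nhdsWithin_le_nhds
    exact (Continuous.tendsto (by fun_prop) x)
  have hGlim : Filter.Tendsto G (nhdsWithin x {x}ᶜ)
      (nhds ((-((k:ℝ)*π * Real.sin (k*π*x)) / -(π * Real.sin (π*x))) * (Real.sqrt 2 * Real.sin (π*x)))) := by
    have hne : -(π * Real.sin (π*x)) ≠ 0 := by
      intro h
      have : π * Real.sin (π*x) = 0 := by linarith
      nlinarith
    have h := (hslope1.div hslope2 hne).mul hsinlim
    apply h.congr'
    apply Filter.eventuallyEq_of_mem self_mem_nhdsWithin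
    intro y hy
    have hyx : y - x ≠ 0 := sub_ne_zero.mpr hy
    simp only [Pi.div_apply, hG]
    rw [div_div_div_cancel_right₀ hyx]
    ring
  have ht1 : Filter.Tendsto (fun δ : ℝ => x - δ) (nhdsWithin 0 (Ioi 0)) (nhdsWithin x {x}ᶜ) := by
    rw [tendsto_nhdsWithin_iff]
    constructor
    · have hc : Continuous (fun δ : ℝ => x - δ) := by fun_prop
      have h := hc.tendsto 0
      simp only [sub_zero] at h
      exact h.mono_left nhdsWithin_le_nhds
    · filter_upwards [self_mem_nhdsWithin] with δ (hδ : δ ∈ Ioi (0:ℝ))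
      simp only [mem_compl_iff, mem_singleton_iff]
      intro h
      have : δ = 0 := by linarith [sub_eq_self.mp h]
      exact absurd this (ne_of_gt hδ)
  have ht2 : Filter.Tendsto (fun δ : ℝ => x + δ) (nhdsWithin 0 (Ioi 0)) (nhdsWithin x {x}ᶜ) := by
    rw [tendsto_nhdsWithin_iff]
    constructor
    · have hc : Continuous (fun δ : ℝ => x + δ) := by fun_prop
      have h := hc.tendsto 0
      simp only [add_zero] at h
      exact h.mono_left nhdsWithin_le_nhds
    · filter_upwards [self_mem_nhdsWithin] with δ (hδ : δ ∈ Ioi (0:ℝ))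
      simp only [mem_compl_iff, mem_singleton_iff]
      intro h
      have : δ = 0 := by nlinarith [add_eq_left.mp h]
      exact absurd this (ne_of_gt hδ)
  have hGdiff : Filter.Tendsto (fun δ : ℝ => G (x - δ) - G (x + δ))
      (nhdsWithin 0 (Ioi 0)) (nhds 0) := by
    have := (hGlim.comp ht1).sub (hGlim.comp ht2)
    simpa using this
  have final := hGdiff.add ((hJm.sub hJp).const_mul C)
  have hval : (0:ℝ) + C * (Real.sin ((↑(k-1):ℝ)*π*x) / Real.sin (π*x)
      - Real.sin ((↑(k+1):ℝ)*π*x) / Real.sin (π*x))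
      = -(↑k * π) * (Real.sqrt 2 * Real.cos (↑k*π*x)) := by
    rw [Nat.cast_sub hk, hC]
    push_cast
    rw [show ((k:ℝ)-1)*π*x = (k:ℝ)*π*x - π*x by ring,
      show ((k:ℝ)+1)*π*x = (k:ℝ)*π*x + π*x by ring, Real.sin_sub, Real.sin_add]
    field_simp
    ring
  rw [hval] at final
  refine Filter.Tendsto.congr' (Filter.eventuallyEq_of_mem hmem (fun δ hδ => ?_)) final
  rw [hey δ hδ]
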